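/- For all natural numbers N₁, N₂ there exists N₃ ≤ 30N₁ + 2N₂ such that the following holds: for every finite symmetric subset S of SL(2,ℤ) containing the identity and generating a subgroup that is not virtually solvable, if a ∈ S^{N₁} is an element of infinite order that is diagonalizable over ℂ, with nonzero non-colinear real eigenvectors u₁, u₂ ∈ ℝ², and if h ∈ S^{N₂} satisfies that neither h·u₁ nor h·u₂ is colinear to u₁ or u₂ (h is in general position with respect to a), then d([u],[v]) ≥ ‖S‖^{-N₃} for all u, v ∈ {u₁, u₂, h·u₁, h·u₂} with [u] ≠ [v]. -/

import Mathlib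

open scoped Pointwise
/-- `a` and `b` freely generate a free subgroup of rank 2: the homomorphism from the free
group on two generators sending the generators to `a` and `b` is injective. -/
def FreelyGenerate {G : Type*} [Group G] (a b : G) : Prop :=
  Function.Injective (FreeGroup.lift (fun x : Bool => if x then a else b) : FreeGroup Bool →* G)

/-- A group is virtually solvable if it has a solvable subgroup of finite index. -/
def IsVirtuallySolvable (G : Type*) [Group G] : Prop :=
  ∃ H : Subgroup G, H.FiniteIndex ∧ IsSolvable H
noncomputable section

/-- Operator norm of a `2×2` real matrix induced by the Euclidean norm on `ℝ²`. -/
def opNorm (A : Matrix (Fin 2) (Fin 2) ℝ) : ℝ :=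
  ‖LinearMap.toContinuousLinearMap (Matrix.toEuclideanLin A)‖

/-- The norm `‖Q‖ = sup_{g ∈ Q} ‖g‖` of a set of matrices. -/
def setNorm (Q : Set (Matrix (Fin 2) (Fin 2) ℝ)) : ℝ :=
  sSup (opNorm '' Q)

/-- `lam` is a (complex) eigenvalue of the real matrix `A`. -/
def IsEigenvalue (A : Matrix (Fin 2) (Fin 2) ℝ) (lam : ℂ) : Prop :=
  ∃ v : Fin 2 → ℂ, v ≠ 0 ∧ (A.map (Complex.ofReal)).mulVec v = lam • v

/-- `Λ(Q)`: the maximal modulus of an eigenvalue of an element of `Q`. -/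
def matLambda (Q : Set (Matrix (Fin 2) (Fin 2) ℝ)) : ℝ :=
  sSup {x : ℝ | ∃ q ∈ Q, ∃ lam : ℂ, IsEigenvalue q lam ∧ x = ‖lam‖}

/-- `E(Q)`: the minimal norm of `Q` over all conjugations by elements of `GL(2,ℝ)`. -/
def minNorm (Q : Set (Matrix (Fin 2) (Fin 2) ℝ)) : ℝ :=
  ⨅ g : GL (Fin 2) ℝ, setNorm ((fun s => (g : Matrix (Fin 2) (Fin 2) ℝ) * s * ((g⁻¹ : GL (Fin 2) ℝ) : Matrix (Fin 2) (Fin 2) ℝ)) '' Q)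

/-- The canonical embedding of `SL(2,ℤ)` into the `2×2` real matrices. -/
def toReal (g : Matrix.SpecialLinearGroup (Fin 2) ℤ) : Matrix (Fin 2) (Fin 2) ℝ :=
  (g : Matrix (Fin 2) (Fin 2) ℤ).map (Int.cast : ℤ → ℝ)

/-- The cross product (determinant) of two vectors of `ℝ²`. -/
def cross (u v : Fin 2 → ℝ) : ℝ := u 0 * v 1 - u 1 * v 0

/-- The Euclidean norm on `ℝ²`. -/
def enorm2 (u : Fin 2 → ℝ) : ℝ := Real.sqrt (u 0 ^ 2 + u 1 ^ 2)

/-- Fubini–Study distance between the lines spanned by `u` and `v`. -/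
def pdist (u v : Fin 2 → ℝ) : ℝ := |cross u v| / (enorm2 u * enorm2 v)


/-! ### Auxiliary lemmas -/

abbrev SL2Z' := Matrix.SpecialLinearGroup (Fin 2) ℤ
lemma enorm2_eq (u : Fin 2 → ℝ) : enorm2 u = ‖(WithLp.equiv 2 (Fin 2 → ℝ)).symm u‖ := by
  rw [EuclideanSpace.norm_eq, enorm2]
  congr 1
  rw [Fin.sum_univ_two]
  simp [Real.norm_eq_abs, sq_abs]

lemma opNorm_nonneg' (A : Matrix (Fin 2) (Fin 2) ℝ) : 0 ≤ opNorm A := norm_nonneg _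

lemma mulVec_enorm2_le (A : Matrix (Fin 2) (Fin 2) ℝ) (u : Fin 2 → ℝ) :
    enorm2 (A.mulVec u) ≤ opNorm A * enorm2 u := by
  rw [enorm2_eq, enorm2_eq]
  have := (LinearMap.toContinuousLinearMap (Matrix.toEuclideanLin A)).le_opNorm
    ((WithLp.equiv 2 (Fin 2 → ℝ)).symm u)
  simpa [opNorm] using this

lemma opNorm_le_bound' (A : Matrix (Fin 2) (Fin 2) ℝ) (C : ℝ) (hC : 0 ≤ C)
    (h : ∀ u, enorm2 (A.mulVec u) ≤ C * enorm2 u) : opNorm A ≤ C := by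
  apply ContinuousLinearMap.opNorm_le_bound _ hC
  intro x
  have := h ((WithLp.equiv 2 (Fin 2 → ℝ)) x)
  rw [enorm2_eq, enorm2_eq] at this
  simpa [Matrix.toLpLin_apply] using this

lemma enorm2_nonneg (u : Fin 2 → ℝ) : 0 ≤ enorm2 u := Real.sqrt_nonneg _

lemma mulVec_apply' (A : Matrix (Fin 2) (Fin 2) ℝ) (u : Fin 2 → ℝ) (i : Fin 2) :
    A.mulVec u i = A i 0 * u 0 + A i 1 * u 1 := by
  simp [Matrix.mulVec, dotProduct, Fin.sum_univ_two]

lemma abs_le_enorm2 (u : Fin 2 → ℝ) (i : Fin 2) : |u i| ≤ enorm2 u := by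
  rw [enorm2, ← Real.sqrt_sq_eq_abs]
  apply Real.sqrt_le_sqrt
  fin_cases i <;> simp <;> nlinarith [sq_nonneg (u 0), sq_nonneg (u 1)]

lemma abs_entry_le_opNorm (A : Matrix (Fin 2) (Fin 2) ℝ) (i j : Fin 2) :
    |A i j| ≤ opNorm A := by
  have key : ∀ v : Fin 2 → ℝ, enorm2 v = 1 → enorm2 (A.mulVec v) ≤ opNorm A := by
    intro v hv
    have := mulVec_enorm2_le A v
    rwa [hv, mul_one] at this
  have h0 : enorm2 ![(1:ℝ),0] = 1 := by simp [enorm2]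
  have h1 : enorm2 ![(0:ℝ),1] = 1 := by simp [enorm2]
  fin_cases j
  · refine le_trans ?_ (key ![1,0] h0)
    refine le_trans (le_of_eq ?_) (abs_le_enorm2 _ i)
    rw [mulVec_apply']; norm_num
  · refine le_trans ?_ (key ![0,1] h1)
    refine le_trans (le_of_eq ?_) (abs_le_enorm2 _ i)
    rw [mulVec_apply']; norm_num

lemma col_sq_le_opNorm_sq (A : Matrix (Fin 2) (Fin 2) ℝ) (j : Fin 2) :
    A 0 j ^ 2 + A 1 j ^ 2 ≤ opNorm A ^ 2 := by
  have key : ∀ v : Fin 2 → ℝ, enorm2 v = 1 → enorm2 (A.mulVec v) ≤ opNorm A := by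
    intro v hv
    have := mulVec_enorm2_le A v
    rwa [hv, mul_one] at this
  have h0 : enorm2 ![(1:ℝ),0] = 1 := by simp [enorm2]
  have h1 : enorm2 ![(0:ℝ),1] = 1 := by simp [enorm2]
  have sq : ∀ u : Fin 2 → ℝ, u 0 ^ 2 + u 1 ^ 2 = enorm2 u ^ 2 := by
    intro u
    rw [enorm2, Real.sq_sqrt] ; positivity
  fin_cases j
  · have := key ![1,0] h0
    have e : A.mulVec ![1,0] = fun i => A i 0 := by
      funext i; rw [mulVec_apply']; norm_num
    rw [e] at this
    have := sq (fun i => A i 0)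
    show A 0 0 ^ 2 + A 1 0 ^ 2 ≤ opNorm A ^ 2
    nlinarith [enorm2_nonneg (fun i => A i 0), opNorm_nonneg' A]
  · have := key ![0,1] h1
    have e : A.mulVec ![0,1] = fun i => A i 1 := by
      funext i; rw [mulVec_apply']; norm_num
    rw [e] at this
    have := sq (fun i => A i 1)
    show A 0 1 ^ 2 + A 1 1 ^ 2 ≤ opNorm A ^ 2
    nlinarith [enorm2_nonneg (fun i => A i 1), opNorm_nonneg' A]

lemma opNorm_one_eq : opNorm 1 = 1 := by
  apply le_antisymm
  · apply opNorm_le_bound' _ _ zero_le_one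
    intro u; simp [Matrix.one_mulVec]
  · simpa using abs_entry_le_opNorm 1 0 0

lemma opNorm_mul' (A B : Matrix (Fin 2) (Fin 2) ℝ) :
    opNorm (A * B) ≤ opNorm A * opNorm B := by
  apply opNorm_le_bound' _ _ (mul_nonneg (opNorm_nonneg' A) (opNorm_nonneg' B))
  intro u
  rw [← Matrix.mulVec_mulVec]
  calc enorm2 (A.mulVec (B.mulVec u)) ≤ opNorm A * enorm2 (B.mulVec u) := mulVec_enorm2_le _ _
    _ ≤ opNorm A * (opNorm B * enorm2 u) :=
        mul_le_mul_of_nonneg_left (mulVec_enorm2_le _ _) (opNorm_nonneg' A)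
    _ = opNorm A * opNorm B * enorm2 u := by ring

lemma toReal_apply (g : SL2Z') (i j : Fin 2) : toReal g i j = ((g.1 i j : ℤ) : ℝ) := rfl

lemma toReal_one : toReal 1 = 1 := by
  funext i j
  rw [toReal_apply]
  simp [Matrix.one_apply, apply_ite (Int.cast : ℤ → ℝ)]

lemma toReal_mul (g h : SL2Z') : toReal (g * h) = toReal g * toReal h := by
  funext i j
  rw [toReal_apply, Matrix.mul_apply, Fin.sum_univ_two]
  have : (g * h).1 i j = g.1 i 0 * h.1 0 j + g.1 i 1 * h.1 1 j := by
    rw [Matrix.SpecialLinearGroup.coe_mul, Matrix.mul_apply, Fin.sum_univ_two]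
  rw [this]
  push_cast
  rfl

lemma toReal_det (g : SL2Z') : (toReal g).det = 1 := by
  rw [Matrix.det_fin_two]
  have h := g.2
  rw [Matrix.det_fin_two] at h
  rw [toReal_apply, toReal_apply, toReal_apply, toReal_apply]
  exact_mod_cast congrArg (Int.cast : ℤ → ℝ) h

lemma le_setNorm (S : Set SL2Z') (hS : S.Finite) (g : SL2Z') (hg : g ∈ S) :
    opNorm (toReal g) ≤ setNorm (toReal '' S) := by
  apply le_csSup
  · exact ((hS.image _).image _).bddAbove
  · exact ⟨toReal g, ⟨g, hg, rfl⟩, rfl⟩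

lemma one_le_setNorm (S : Set SL2Z') (hS : S.Finite) (h1 : (1:SL2Z') ∈ S) :
    1 ≤ setNorm (toReal '' S) := by
  have := le_setNorm S hS 1 h1
  rwa [toReal_one, opNorm_one_eq] at this

lemma pow_opNorm_le (S : Set SL2Z') (hS : S.Finite) : ∀ (n : ℕ) (a : SL2Z'), a ∈ S ^ n →
    opNorm (toReal a) ≤ setNorm (toReal '' S) ^ n := by
  intro n
  induction n with
  | zero =>
    intro a ha
    rw [pow_zero, Set.mem_one] at ha
    subst ha
    simp [toReal_one, opNorm_one_eq]
  | succ n ih =>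
    intro a ha
    rw [pow_succ] at ha
    obtain ⟨b, hb, c, hc, rfl⟩ := Set.mem_mul.mp ha
    rw [toReal_mul]
    calc opNorm (toReal b * toReal c) ≤ opNorm (toReal b) * opNorm (toReal c) := opNorm_mul' _ _
      _ ≤ setNorm (toReal '' S) ^ n * setNorm (toReal '' S) := by
          apply mul_le_mul (ih b hb) (le_setNorm S hS c hc) (opNorm_nonneg' _)
          exact pow_nonneg (le_trans (opNorm_nonneg' _) (le_setNorm S hS c hc)) n
      _ = setNorm (toReal '' S) ^ (n+1) := by ring

lemma small_classify (a b c d : ℤ) (h1 : a^2+c^2 ≤ 1) (h2 : b^2+d^2 ≤ 1) (hdet : a*d - b*c = 1) :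
    (a = 1 ∧ b = 0 ∧ c = 0 ∧ d = 1) ∨ (a = 0 ∧ b = -1 ∧ c = 1 ∧ d = 0) ∨
    (a = -1 ∧ b = 0 ∧ c = 0 ∧ d = -1) ∨ (a = 0 ∧ b = 1 ∧ c = -1 ∧ d = 0) := by
  have ha : -1 ≤ a ∧ a ≤ 1 := by constructor <;> nlinarith
  have hb : -1 ≤ b ∧ b ≤ 1 := by constructor <;> nlinarith
  have hc : -1 ≤ c ∧ c ≤ 1 := by constructor <;> nlinarith
  have hd : -1 ≤ d ∧ d ≤ 1 := by constructor <;> nlinarith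
  obtain ⟨ha1, ha2⟩ := ha; obtain ⟨hb1, hb2⟩ := hb
  obtain ⟨hc1, hc2⟩ := hc; obtain ⟨hd1, hd2⟩ := hd
  interval_cases a <;> interval_cases b <;> interval_cases c <;> interval_cases d <;> omega

def Jmat : SL2Z' := ⟨!![0,-1;1,0], by norm_num [Matrix.det_fin_two]⟩

lemma mem_zpowers_of_small (g : SL2Z') (h1 : (g.1 0 0)^2 + (g.1 1 0)^2 ≤ 1)
    (h2 : (g.1 0 1)^2 + (g.1 1 1)^2 ≤ 1) : g ∈ Subgroup.zpowers Jmat := by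
  have hdet := g.2
  rw [Matrix.det_fin_two] at hdet
  have hcl := small_classify (g.1 0 0) (g.1 0 1) (g.1 1 0) (g.1 1 1) h1 h2 hdet
  have key : ∀ (k : SL2Z'), g.1 = k.1 → g ∈ Subgroup.zpowers Jmat → True := fun _ _ _ => trivial
  have ext2 : ∀ (k : SL2Z'), g.1 0 0 = k.1 0 0 → g.1 0 1 = k.1 0 1 → g.1 1 0 = k.1 1 0 →
      g.1 1 1 = k.1 1 1 → g = k := by
    intro k e1 e2 e3 e4
    apply Subtype.ext
    funext i j
    fin_cases i <;> fin_cases j <;> assumption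
  have hJ2 : Jmat^2 = ⟨!![-1,0;0,-1], by norm_num [Matrix.det_fin_two]⟩ := by
    apply Subtype.ext
    rw [pow_two, Matrix.SpecialLinearGroup.coe_mul]
    norm_num [Jmat, Matrix.mul_fin_two]
  have hJ3 : Jmat^3 = ⟨!![0,1;-1,0], by norm_num [Matrix.det_fin_two]⟩ := by
    apply Subtype.ext
    rw [pow_succ, Matrix.SpecialLinearGroup.coe_mul, hJ2]
    norm_num [Jmat, Matrix.mul_fin_two]
  rcases hcl with ⟨e1,e2,e3,e4⟩ | ⟨e1,e2,e3,e4⟩ | ⟨e1,e2,e3,e4⟩ | ⟨e1,e2,e3,e4⟩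
  · have : g = 1 := by
      apply ext2 <;> simp [Matrix.SpecialLinearGroup.coe_one, e1,e2,e3,e4]
    rw [this]; exact one_mem _
  · have : g = Jmat := by apply ext2 <;> simp [Jmat, e1,e2,e3,e4]
    rw [this]; exact Subgroup.mem_zpowers _
  · have : g = Jmat^2 := by rw [hJ2]; apply ext2 <;> simp [e1,e2,e3,e4]
    rw [this]; exact zpow_mem (Subgroup.mem_zpowers _) 2
  · have : g = Jmat^3 := by rw [hJ3]; apply ext2 <;> simp [e1,e2,e3,e4]
    rw [this]; exact zpow_mem (Subgroup.mem_zpowers _) 3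

lemma virtsolv (S : Set SL2Z') (hsub : S ⊆ ↑(Subgroup.zpowers Jmat)) :
    IsVirtuallySolvable (Subgroup.closure S) := by
  have hle : Subgroup.closure S ≤ Subgroup.zpowers Jmat := (Subgroup.closure_le _).mpr hsub
  haveI : Group.IsSolvable (Subgroup.zpowers Jmat) := by
    letI := IsCyclic.commGroup (α := Subgroup.zpowers Jmat); infer_instance
  have : Group.IsSolvable (Subgroup.closure S) :=
    solvable_of_solvable_injective (Subgroup.inclusion_injective hle)
  exact ⟨⊤, inferInstance, (inferInstance : Group.IsSolvable _)⟩

def ConjPair (c c' x y : ℝ) : Prop := ∃ m n : ℤ, x = m + n*c ∧ y = m + n*c'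

namespace ConjPair
variable {c c' : ℝ}

lemma intC (k : ℤ) : ConjPair c c' k k := ⟨k, 0, by push_cast; ring, by push_cast; ring⟩

lemma base : ConjPair c c' c c' := ⟨0, 1, by push_cast; ring, by push_cast; ring⟩

lemma add {x y x' y' : ℝ} (h : ConjPair c c' x y) (h' : ConjPair c c' x' y') :
    ConjPair c c' (x + x') (y + y') := by
  obtain ⟨m,n,rfl,rfl⟩ := h; obtain ⟨m',n',rfl,rfl⟩ := h'
  exact ⟨m+m', n+n', by push_cast; ring, by push_cast; ring⟩

lemma neg {x y : ℝ} (h : ConjPair c c' x y) : ConjPair c c' (-x) (-y) := by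
  obtain ⟨m,n,rfl,rfl⟩ := h
  exact ⟨-m, -n, by push_cast; ring, by push_cast; ring⟩

lemma sub {x y x' y' : ℝ} (h : ConjPair c c' x y) (h' : ConjPair c c' x' y') :
    ConjPair c c' (x - x') (y - y') := by
  have := h.add h'.neg; simpa [sub_eq_add_neg] using this

lemma mul {tz : ℤ} (hs : c + c' = tz) (hp : c * c' = 1) {x y x' y' : ℝ}
    (h : ConjPair c c' x y) (h' : ConjPair c c' x' y') :
    ConjPair c c' (x * x') (y * y') := by
  obtain ⟨m,n,rfl,rfl⟩ := h; obtain ⟨m',n',rfl,rfl⟩ := h'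
  refine ⟨m*m' - n*n', m*n' + m'*n + n*n'*tz, ?_, ?_⟩
  · have hc2 : c^2 = tz*c - 1 := by linear_combination c * hs - hp
    push_cast
    linear_combination (n:ℝ) * (n':ℝ) * hc2
  · have hc2 : c'^2 = tz*c' - 1 := by linear_combination c' * hs - hp
    push_cast
    linear_combination (n:ℝ) * (n':ℝ) * hc2

lemma one_le_abs_mul {tz : ℤ} (hs : c + c' = tz) (hp : c * c' = 1) {x y : ℝ}
    (h : ConjPair c c' x y) (hx : x ≠ 0) (hy : y ≠ 0) : 1 ≤ |x * y| := by
  obtain ⟨m,n,rfl,rfl⟩ := h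
  have key : ((m:ℝ) + n*c) * (m + n*c') = ((m^2 + m*n*tz + n^2 : ℤ) : ℝ) := by
    push_cast
    linear_combination (m:ℝ) * (n:ℝ) * hs + (n:ℝ)^2 * hp
  have hK : (m^2 + m*n*tz + n^2 : ℤ) ≠ 0 := by
    intro h0
    apply mul_ne_zero hx hy
    rw [key, h0, Int.cast_zero]
  rw [key, ← Int.cast_abs]
  exact_mod_cast Int.one_le_abs hK

end ConjPair

lemma enorm2_pos (u : Fin 2 → ℝ) (h : u ≠ 0) : 0 < enorm2 u := by
  have h2 : u 0 ≠ 0 ∨ u 1 ≠ 0 := by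
    by_contra hc
    push_neg at hc
    exact h (funext fun i => by fin_cases i <;> simp [hc.1, hc.2])
  apply Real.sqrt_pos.mpr
  rcases h2 with h2 | h2 <;> positivity

lemma cross_abs_le (u v : Fin 2 → ℝ) : |cross u v| ≤ enorm2 u * enorm2 v := by
  rw [← Real.sqrt_sq_eq_abs, enorm2, enorm2, ← Real.sqrt_mul (by positivity)]
  apply Real.sqrt_le_sqrt
  unfold cross
  nlinarith [sq_nonneg (u 0 * v 0 + u 1 * v 1)]

lemma enorm2_smul (k : ℝ) (u : Fin 2 → ℝ) : enorm2 (k • u) = |k| * enorm2 u := by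
  unfold enorm2
  rw [← Real.sqrt_sq_eq_abs, ← Real.sqrt_mul (by positivity)]
  congr 1
  simp [Pi.smul_apply, smul_eq_mul]
  ring

lemma cross_smul_left (k : ℝ) (u v : Fin 2 → ℝ) : cross (k • u) v = k * cross u v := by
  simp [cross, Pi.smul_apply, smul_eq_mul]; ring

lemma cross_smul_right (k : ℝ) (u v : Fin 2 → ℝ) : cross u (k • v) = k * cross u v := by
  simp [cross, Pi.smul_apply, smul_eq_mul]; ring

lemma cross_mulVec (A : Matrix (Fin 2) (Fin 2) ℝ) (u v : Fin 2 → ℝ) :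
    cross (A.mulVec u) (A.mulVec v) = A.det * cross u v := by
  rw [Matrix.det_fin_two]
  unfold cross
  rw [mulVec_apply', mulVec_apply', mulVec_apply', mulVec_apply']
  ring

lemma cross_self' (u : Fin 2 → ℝ) : cross u u = 0 := by unfold cross; ring

lemma cross_anti (u v : Fin 2 → ℝ) : cross u v = - cross v u := by unfold cross; ring

lemma pdist_smul_smul (k l : ℝ) (hk : k ≠ 0) (hl : l ≠ 0) (u v : Fin 2 → ℝ) :
    pdist (k • u) (l • v) = pdist u v := by
  unfold pdist
  rw [cross_smul_left, cross_smul_right, enorm2_smul, enorm2_smul, abs_mul, abs_mul]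
  rw [show |k| * enorm2 u * (|l| * enorm2 v) = |k| * |l| * (enorm2 u * enorm2 v) by ring]
  rw [show |k| * (|l| * |cross u v|) = |k| * |l| * |cross u v| by ring]
  rw [mul_div_mul_left]
  positivity

lemma pdist_ge (X Y X' Y' : Fin 2 → ℝ)
    (hone : 1 ≤ |cross X Y * cross X' Y'|)
    (hx : cross X Y ≠ 0)
    (B : ℝ) (hB : |cross X' Y'| * (enorm2 X * enorm2 Y) ≤ B) :
    1 / B ≤ pdist X Y := by
  have hX : X ≠ 0 := by
    intro h; apply hx; rw [h]; unfold cross; simp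
  have hY : Y ≠ 0 := by
    intro h; apply hx; rw [h]; unfold cross; simp
  have hE : 0 < enorm2 X * enorm2 Y := mul_pos (enorm2_pos _ hX) (enorm2_pos _ hY)
  have hy : cross X' Y' ≠ 0 := by
    intro h; rw [h, mul_zero, abs_zero] at hone; linarith
  have hyE : 0 < |cross X' Y'| * (enorm2 X * enorm2 Y) := by
    apply mul_pos _ hE
    exact abs_pos.mpr hy
  have hB0 : 0 < B := lt_of_lt_of_le hyE hB
  rw [abs_mul] at hone
  -- pdist X Y = |cross X Y| / E ≥ 1/(|y| E) ≥ 1/B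
  have step1 : 1 / B ≤ 1 / (|cross X' Y'| * (enorm2 X * enorm2 Y)) :=
    one_div_le_one_div_of_le hyE hB
  apply le_trans step1
  unfold pdist
  rw [div_le_div_iff₀ hyE hE]
  calc 1 * (enorm2 X * enorm2 Y) = enorm2 X * enorm2 Y := one_mul _
    _ ≤ (|cross X Y| * |cross X' Y'|) * (enorm2 X * enorm2 Y) := by
        nlinarith [hE, hone]
    _ = |cross X Y| * (|cross X' Y'| * (enorm2 X * enorm2 Y)) := by ring


lemma abs_root_le (c c' t : ℝ) (hs : c + c' = t) (hp : c * c' = 1) : |c| ≤ |t| := by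
  rcases lt_trichotomy c 0 with hc | hc | hc
  · have hc' : c' < 0 := by nlinarith
    calc |c| = -c := abs_of_neg hc
      _ ≤ -c - c' := by linarith
      _ = -t := by linarith
      _ ≤ |t| := neg_le_abs t
  · exfalso; rw [hc] at hp; simp at hp
  · have hc' : 0 < c' := by nlinarith
    calc |c| = c := abs_of_pos hc
      _ ≤ c + c' := by linarith
      _ = t := hs
      _ ≤ |t| := le_abs_self t

lemma vec_ne_zero {u : Fin 2 → ℝ} (h : u ≠ 0) : u 0 ≠ 0 ∨ u 1 ≠ 0 := by
  by_contra hc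
  push_neg at hc
  exact h (funext fun i => by fin_cases i <;> simp [hc.1, hc.2])

lemma eigen_structure (a : SL2Z') (hford : ¬ IsOfFinOrder a) (c₁ c₂ : ℝ) (u₁ u₂ : Fin 2 → ℝ)
    (hu₁ : u₁ ≠ 0) (hu₂ : u₂ ≠ 0)
    (he₁ : (toReal a).mulVec u₁ = c₁ • u₁) (he₂ : (toReal a).mulVec u₂ = c₂ • u₂)
    (hcr : cross u₁ u₂ ≠ 0) :
    c₁ + c₂ = ((a.1 0 0 + a.1 1 1 : ℤ) : ℝ) ∧ c₁ * c₂ = 1 ∧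
    (∃ k₁ : ℝ, k₁ ≠ 0 ∧ u₁ = k₁ • ![((a.1 0 1 : ℤ):ℝ), c₁ - ((a.1 0 0:ℤ):ℝ)]) ∧
    (∃ k₂ : ℝ, k₂ ≠ 0 ∧ u₂ = k₂ • ![((a.1 0 1 : ℤ):ℝ), c₂ - ((a.1 0 0:ℤ):ℝ)]) := by
  set p : ℝ := ((a.1 0 0 : ℤ) : ℝ) with hpd
  set q : ℝ := ((a.1 0 1 : ℤ) : ℝ) with hqd
  set r : ℝ := ((a.1 1 0 : ℤ) : ℝ) with hrd
  set s : ℝ := ((a.1 1 1 : ℤ) : ℝ) with hsd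
  have hdetz := a.2
  rw [Matrix.det_fin_two] at hdetz
  have hdet : p * s - q * r = 1 := by
    rw [hpd, hqd, hrd, hsd]
    push_cast
    exact_mod_cast congrArg (Int.cast : ℤ → ℝ) hdetz
  have E1 : p * u₁ 0 + q * u₁ 1 = c₁ * u₁ 0 := by
    have := congrFun he₁ 0
    rw [mulVec_apply'] at this
    simpa [toReal_apply, ← hpd, ← hqd] using this
  have E2 : r * u₁ 0 + s * u₁ 1 = c₁ * u₁ 1 := by
    have := congrFun he₁ 1
    rw [mulVec_apply'] at this
    simpa [toReal_apply, ← hrd, ← hsd] using this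
  have E3 : p * u₂ 0 + q * u₂ 1 = c₂ * u₂ 0 := by
    have := congrFun he₂ 0
    rw [mulVec_apply'] at this
    simpa [toReal_apply, ← hpd, ← hqd] using this
  have E4 : r * u₂ 0 + s * u₂ 1 = c₂ * u₂ 1 := by
    have := congrFun he₂ 1
    rw [mulVec_apply'] at this
    simpa [toReal_apply, ← hrd, ← hsd] using this
  have hcrv : u₁ 0 * u₂ 1 - u₁ 1 * u₂ 0 ≠ 0 := hcr
  -- characteristic equations
  have char : ∀ (c : ℝ) (w : Fin 2 → ℝ), w ≠ 0 →
      (p * w 0 + q * w 1 = c * w 0) → (r * w 0 + s * w 1 = c * w 1) →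
      c^2 - (p + s)*c + 1 = 0 := by
    intro c w hw F1 F2
    have key : (p - c) * (s - c) - q * r = 0 := by
      rcases vec_ne_zero hw with hx | hx
      · have h5 : ((p - c) * (s - c) - q * r) * w 0 = 0 := by linear_combination (s - c) * F1 - q * F2
        exact (mul_eq_zero.mp h5).resolve_right hx
      · have h6 : ((p - c) * (s - c) - q * r) * w 1 = 0 := by linear_combination (p - c) * F2 - r * F1
        exact (mul_eq_zero.mp h6).resolve_right hx
    linear_combination key - hdet
  have char₁ := char c₁ u₁ hu₁ E1 E2
  have char₂ := char c₂ u₂ hu₂ E3 E4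
  -- c₁ ≠ c₂
  have hne : c₁ ≠ c₂ := by
    intro hcc
    subst hcc
    have hpc : p = c₁ := by
      have : (p - c₁) * (u₁ 0 * u₂ 1 - u₁ 1 * u₂ 0) = 0 := by
        linear_combination u₂ 1 * E1 - u₁ 1 * E3
      have := (mul_eq_zero.mp this).resolve_right hcrv
      linarith
    have hq0 : q = 0 := by
      have : q * (u₁ 0 * u₂ 1 - u₁ 1 * u₂ 0) = 0 := by
        linear_combination u₁ 0 * E3 - u₂ 0 * E1
      exact (mul_eq_zero.mp this).resolve_right hcrv
    have hsc : s = c₁ := by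
      have : (s - c₁) * (u₁ 0 * u₂ 1 - u₁ 1 * u₂ 0) = 0 := by
        linear_combination u₁ 0 * E4 - u₂ 0 * E2
      have := (mul_eq_zero.mp this).resolve_right hcrv
      linarith
    have hr0 : r = 0 := by
      have : r * (u₁ 0 * u₂ 1 - u₁ 1 * u₂ 0) = 0 := by
        linear_combination u₂ 1 * E2 - u₁ 1 * E4
      exact (mul_eq_zero.mp this).resolve_right hcrv
    -- integer consequences
    rw [hqd] at hq0
    rw [hrd] at hr0
    have hq0z : a.1 0 1 = 0 := by exact_mod_cast hq0
    have hr0z : a.1 1 0 = 0 := by exact_mod_cast hr0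
    have hps : a.1 0 0 = a.1 1 1 := by
      have hps' : p = s := by rw [hpc, hsc]
      rw [hpd, hsd] at hps'
      exact_mod_cast hps'
    have hsq : a.1 0 0 * a.1 1 1 = 1 := by
      rw [hq0z, hr0z] at hdetz
      omega
    have hpm : a.1 0 0 = 1 ∧ a.1 1 1 = 1 ∨ a.1 0 0 = -1 ∧ a.1 1 1 = -1 := by
      rw [← hps] at hsq ⊢
      rcases mul_self_eq_one_iff.mp hsq with h | h
      · left; exact ⟨h, by omega⟩
      · right; exact ⟨h, by omega⟩
    apply hford
    have ext2 : ∀ (k : SL2Z'), a.1 0 0 = k.1 0 0 → a.1 0 1 = k.1 0 1 → a.1 1 0 = k.1 1 0 →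
        a.1 1 1 = k.1 1 1 → a = k := by
      intro k e1 e2 e3 e4
      apply Subtype.ext
      funext i j
      fin_cases i <;> fin_cases j <;> assumption
    rcases hpm with ⟨h1, h2⟩ | ⟨h1, h2⟩
    · have : a = 1 := by
        apply ext2 <;>
          simp [Matrix.SpecialLinearGroup.coe_one, Matrix.one_apply, h1, h2, hq0z, hr0z]
      rw [this]; exact IsOfFinOrder.one
    · have hm : a = (⟨!![-1,0;0,-1], by norm_num [Matrix.det_fin_two]⟩ : SL2Z') := by
        apply ext2 <;> simp [h1, h2, hq0z, hr0z]
      apply isOfFinOrder_iff_pow_eq_one.mpr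
      refine ⟨2, two_pos, ?_⟩
      rw [hm]
      apply Subtype.ext
      erw [pow_two, Matrix.SpecialLinearGroup.coe_mul, Matrix.SpecialLinearGroup.coe_one]
      norm_num [Matrix.mul_fin_two]
      exact Matrix.one_fin_two.symm
  -- trace and determinant relations
  have hs' : c₁ + c₂ = p + s := by
    have h7 : (c₁ - c₂) * (c₁ + c₂ - (p + s)) = 0 := by linear_combination char₁ - char₂
    have := (mul_eq_zero.mp h7).resolve_left (sub_ne_zero.mpr hne)
    linarith
  have hp' : c₁ * c₂ = 1 := by linear_combination -char₁ + c₁ * hs'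
  -- q ≠ 0
  have hqne : q ≠ 0 := by
    intro hq0
    have cval : ∀ (c : ℝ) (w : Fin 2 → ℝ), w ≠ 0 →
        (p * w 0 + q * w 1 = c * w 0) → (r * w 0 + s * w 1 = c * w 1) →
        c = p ∨ c = s := by
      intro c w hw F1 F2
      by_cases hx : w 0 = 0
      · right
        rcases vec_ne_zero hw with h | h
        · exact absurd hx h
        · have : s * w 1 = c * w 1 := by rw [hx] at F2; linarith
          have h8 : (s - c) * w 1 = 0 := by linarith
          have := (mul_eq_zero.mp h8).resolve_right h
          linarith
      · left
        have : p * w 0 = c * w 0 := by rw [hq0] at F1; linarith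
        have h8 : (p - c) * w 0 = 0 := by linarith
        have := (mul_eq_zero.mp h8).resolve_right hx
        linarith
    have hc₁v := cval c₁ u₁ hu₁ E1 E2
    have hc₂v := cval c₂ u₂ hu₂ E3 E4
    have hpsz : a.1 0 0 * a.1 1 1 = 1 := by
      have hq0' : ((a.1 0 1 : ℤ) : ℝ) = 0 := by rw [← hqd]; exact hq0
      have hq0z : a.1 0 1 = 0 := by exact_mod_cast hq0'
      rw [hq0z] at hdetz
      omega

    have hpes : p = s := by
      rcases Int.eq_one_or_neg_one_of_mul_eq_one' hpsz with ⟨h1, h2⟩ | ⟨h1, h2⟩ <;>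
        rw [hpd, hsd, h1, h2]
    rcases hc₁v with h1 | h1 <;> rcases hc₂v with h2 | h2
    · exact hne (h1.trans h2.symm)
    · exact hne (h1.trans (hpes.trans h2.symm))
    · exact hne (h1.trans (hpes.symm.trans h2.symm))
    · exact hne (h1.trans h2.symm)
  -- eigenvector normalization
  have mkk : ∀ (c : ℝ) (w : Fin 2 → ℝ), w ≠ 0 →
      (p * w 0 + q * w 1 = c * w 0) → (r * w 0 + s * w 1 = c * w 1) →
      ∃ k : ℝ, k ≠ 0 ∧ w = k • ![q, c - p] := by
    intro c w hw F1 F2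
    have hx : w 0 ≠ 0 := by
      intro h0
      rcases vec_ne_zero hw with h | h
      · exact h h0
      · apply h
        have : q * w 1 = 0 := by rw [h0] at F1; linarith
        exact (mul_eq_zero.mp this).resolve_left hqne
    refine ⟨w 0 / q, div_ne_zero hx hqne, ?_⟩
    funext i
    fin_cases i
    · show w 0 = w 0 / q * q
      field_simp
    · show w 1 = w 0 / q * (c - p)
      rw [div_mul_eq_mul_div, eq_div_iff hqne]
      linear_combination F1
  obtain ⟨k₁, hk₁, hw₁⟩ := mkk c₁ u₁ hu₁ E1 E2
  obtain ⟨k₂, hk₂, hw₂⟩ := mkk c₂ u₂ hu₂ E3 E4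
  refine ⟨by rw [hs']; push_cast; rw [hpd, hsd], hp', ⟨k₁, hk₁, ?_⟩, ⟨k₂, hk₂, ?_⟩⟩
  · rw [hw₁, hqd, hpd]
  · rw [hw₂, hqd, hpd]


lemma quad_bound (M₁ M₂ : ℝ) (h4 : 0 ≤ M₁^4) (hsq : 1 ≤ M₂^2) :
    4*M₁*(4*M₁)*(4*M₁*(4*M₁)) ≤ 256*M₁^4*M₂^2 := by nlinarith

set_option maxHeartbeats 1000000 in
/-- **Arithmetic linear separation.** For all `N₁, N₂` there exists `N₃ ≤ 30N₁ + 2N₂` such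
that for every finite symmetric `S ⊂ SL(2,ℤ)` containing `1` generating a non-virtually
solvable subgroup, every torsion-free semisimple `a ∈ S^{N₁}` with real eigenvectors
`u₁, u₂`, and every `h ∈ S^{N₂}` in general position with respect to `a`, one has
`d([u],[v]) ≥ ‖S‖^{-N₃}` for all `u, v ∈ {u₁, u₂, h u₁, h u₂}` with `[u] ≠ [v]`. -/
theorem arithmetic_linear_separation (N₁ N₂ : ℕ) :
    ∃ N₃ : ℕ, N₃ ≤ 30 * N₁ + 2 * N₂ ∧
      ∀ S : Set (Matrix.SpecialLinearGroup (Fin 2) ℤ), S.Finite → S⁻¹ = S →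
        (1 : Matrix.SpecialLinearGroup (Fin 2) ℤ) ∈ S →
        ¬ IsVirtuallySolvable (Subgroup.closure S) →
        ∀ a ∈ S ^ N₁, ¬ IsOfFinOrder a →
        ∀ u₁ u₂ : Fin 2 → ℝ, u₁ ≠ 0 → u₂ ≠ 0 →
          (∃ c : ℝ, (toReal a).mulVec u₁ = c • u₁) →
          (∃ c : ℝ, (toReal a).mulVec u₂ = c • u₂) →
          cross u₁ u₂ ≠ 0 →
        ∀ h ∈ S ^ N₂,
          cross ((toReal h).mulVec u₁) u₁ ≠ 0 →
          cross ((toReal h).mulVec u₁) u₂ ≠ 0 →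
          cross ((toReal h).mulVec u₂) u₁ ≠ 0 →
          cross ((toReal h).mulVec u₂) u₂ ≠ 0 →
          ∀ u ∈ ({u₁, u₂, (toReal h).mulVec u₁, (toReal h).mulVec u₂} : Set (Fin 2 → ℝ)),
            ∀ v ∈ ({u₁, u₂, (toReal h).mulVec u₁, (toReal h).mulVec u₂} : Set (Fin 2 → ℝ)),
              cross u v ≠ 0 →
                setNorm (toReal '' S) ^ (-(N₃ : ℤ)) ≤ pdist u v := by
  refine ⟨30 * N₁ + 2 * N₂, le_refl _, ?_⟩
  intro S hSfin hSsym h1S hns a haS hford u₁ u₂ hu₁ hu₂ hev₁ hev₂ hcross h hhS hg11 hg12 hg21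
    hg22 u hu v hv huv
  obtain ⟨c₁, he₁⟩ := hev₁
  obtain ⟨c₂, he₂⟩ := hev₂
  set Λ := setNorm (toReal '' S) with hΛdef
  have hΛ1 : 1 ≤ Λ := one_le_setNorm S hSfin h1S
  have hΛ0 : 0 < Λ := lt_of_lt_of_le one_pos hΛ1
  rcases Nat.eq_zero_or_pos N₁ with hN0 | hN₁pos
  · exfalso
    rw [hN0, pow_zero, Set.mem_one] at haS
    exact hford (haS ▸ IsOfFinOrder.one)
  -- Λ² ≥ 2
  have hΛ2 : (2:ℝ) ≤ Λ^2 := by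
    by_contra hlt
    push_neg at hlt
    apply hns
    apply virtsolv
    intro g hg
    have hgop : opNorm (toReal g) ≤ Λ := le_setNorm S hSfin g hg
    have hop2 : opNorm (toReal g)^2 < 2 :=
      lt_of_le_of_lt (pow_le_pow_left₀ (opNorm_nonneg' _) hgop 2) hlt
    apply SetLike.mem_coe.mpr
    apply mem_zpowers_of_small
    · have hcol := col_sq_le_opNorm_sq (toReal g) 0
      rw [toReal_apply, toReal_apply] at hcol
      have hcast : (((g.1 0 0)^2 + (g.1 1 0)^2 : ℤ) : ℝ) < 2 := by
        push_cast
        exact lt_of_le_of_lt hcol hop2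
      have : ((g.1 0 0)^2 + (g.1 1 0)^2 : ℤ) < 2 := by exact_mod_cast hcast
      omega
    · have hcol := col_sq_le_opNorm_sq (toReal g) 1
      rw [toReal_apply, toReal_apply] at hcol
      have hcast : (((g.1 0 1)^2 + (g.1 1 1)^2 : ℤ) : ℝ) < 2 := by
        push_cast
        exact lt_of_le_of_lt hcol hop2
      have : ((g.1 0 1)^2 + (g.1 1 1)^2 : ℤ) < 2 := by exact_mod_cast hcast
      omega
  obtain ⟨hs, hp, ⟨k₁, hk₁, hU₁⟩, ⟨k₂, hk₂, hU₂⟩⟩ :=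
    eigen_structure a hford c₁ c₂ u₁ u₂ hu₁ hu₂ he₁ he₂ hcross
  set M₁ : ℝ := Λ ^ N₁ with hM₁def
  set M₂ : ℝ := Λ ^ N₂ with hM₂def
  have hM₁pos : (0:ℝ) < M₁ := pow_pos hΛ0 N₁
  have hM₂pos : (0:ℝ) < M₂ := pow_pos hΛ0 N₂
  have hM₁1 : (1:ℝ) ≤ M₁ := one_le_pow₀ hΛ1
  have hM₂1 : (1:ℝ) ≤ M₂ := one_le_pow₀ hΛ1
  have hopa : opNorm (toReal a) ≤ M₁ := pow_opNorm_le S hSfin N₁ a haS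
  have hoph : opNorm (toReal h) ≤ M₂ := pow_opNorm_le S hSfin N₂ h hhS
  set H := toReal h with hHdef
  have hdetH : H.det = 1 := toReal_det h
  -- entry bounds for a
  have hpz : |((a.1 0 0 : ℤ):ℝ)| ≤ M₁ := by
    rw [← toReal_apply]; exact le_trans (abs_entry_le_opNorm _ 0 0) hopa
  have hqzb : |((a.1 0 1 : ℤ):ℝ)| ≤ M₁ := by
    rw [← toReal_apply]; exact le_trans (abs_entry_le_opNorm _ 0 1) hopa
  have hszb : |((a.1 1 1 : ℤ):ℝ)| ≤ M₁ := by
    rw [← toReal_apply]; exact le_trans (abs_entry_le_opNorm _ 1 1) hopa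
  have htzb : |((a.1 0 0 + a.1 1 1 : ℤ):ℝ)| ≤ 2*M₁ := by
    push_cast
    calc |((a.1 0 0 : ℤ):ℝ) + ((a.1 1 1 : ℤ):ℝ)| ≤ |((a.1 0 0 : ℤ):ℝ)| + |((a.1 1 1 : ℤ):ℝ)| :=
        abs_add_le _ _
      _ ≤ 2*M₁ := by linarith
  have hc₁b : |c₁| ≤ 2*M₁ := le_trans (abs_root_le c₁ c₂ _ hs hp) htzb
  have hc₂b : |c₂| ≤ 2*M₁ := by
    have hs2 : c₂ + c₁ = ((a.1 0 0 + a.1 1 1 : ℤ):ℝ) := by rw [add_comm]; exact hs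
    have hp2 : c₂ * c₁ = 1 := by rw [mul_comm]; exact hp
    exact le_trans (abs_root_le c₂ c₁ _ hs2 hp2) htzb
  set w₁ : Fin 2 → ℝ := ![((a.1 0 1 : ℤ):ℝ), c₁ - ((a.1 0 0:ℤ):ℝ)] with hw₁def
  set w₂ : Fin 2 → ℝ := ![((a.1 0 1 : ℤ):ℝ), c₂ - ((a.1 0 0:ℤ):ℝ)] with hw₂def
  -- norm bounds for eigenvectors
  have hWn : ∀ e : ℝ, |e| ≤ 2*M₁ → enorm2 ![((a.1 0 1 : ℤ):ℝ), e - ((a.1 0 0:ℤ):ℝ)] ≤ 4*M₁ := by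
    intro e he
    have h1 : ((a.1 0 1 : ℤ):ℝ)^2 ≤ M₁^2 := by
      rw [← sq_abs]; exact pow_le_pow_left₀ (abs_nonneg _) hqzb 2
    have h2 : (e - ((a.1 0 0:ℤ):ℝ))^2 ≤ (3*M₁)^2 := by
      rw [← sq_abs]
      apply pow_le_pow_left₀ (abs_nonneg _) _ 2
      have habs : |e - ((a.1 0 0:ℤ):ℝ)| ≤ |e| + |((a.1 0 0:ℤ):ℝ)| := by
        rw [sub_eq_add_neg]
        exact le_trans (abs_add_le _ _) (le_of_eq (by rw [abs_neg]))
      linarith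
    unfold enorm2
    simp only [Matrix.cons_val_zero, Matrix.cons_val_one, Matrix.head_cons]
    calc Real.sqrt (((a.1 0 1 : ℤ):ℝ)^2 + (e - ((a.1 0 0:ℤ):ℝ))^2)
        ≤ Real.sqrt ((4*M₁)^2) := Real.sqrt_le_sqrt (by nlinarith)
      _ = 4*M₁ := Real.sqrt_sq (by linarith)
  have hw₁n : enorm2 w₁ ≤ 4*M₁ := hWn c₁ hc₁b
  have hw₂n : enorm2 w₂ ≤ 4*M₁ := hWn c₂ hc₂b
  have hHn : ∀ X : Fin 2 → ℝ, enorm2 X ≤ 4*M₁ → enorm2 (H.mulVec X) ≤ M₂*(4*M₁) := by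
    intro X hX
    calc enorm2 (H.mulVec X) ≤ opNorm H * enorm2 X := mulVec_enorm2_le H X
      _ ≤ M₂ * (4*M₁) := by
          apply mul_le_mul hoph hX (enorm2_nonneg X) (le_of_lt hM₂pos)
  have hHw₁n : enorm2 (H.mulVec w₁) ≤ M₂*(4*M₁) := hHn w₁ hw₁n
  have hHw₂n : enorm2 (H.mulVec w₂) ≤ M₂*(4*M₁) := hHn w₂ hw₂n
  -- nonvanishing crosses
  have anti : ∀ X Y : Fin 2 → ℝ, cross X Y ≠ 0 → cross Y X ≠ 0 := by
    intro X Y hne h0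
    exact hne (by rw [cross_anti, h0, neg_zero])
  have n0 : cross w₁ w₂ ≠ 0 := by
    intro h0
    apply hcross
    rw [hU₁, hU₂, cross_smul_left, cross_smul_right, h0, mul_zero, mul_zero]
  have n11 : cross (H.mulVec w₁) w₁ ≠ 0 := by
    intro h0
    apply hg11
    rw [hU₁, Matrix.mulVec_smul, cross_smul_left, cross_smul_right, h0, mul_zero, mul_zero]
  have n12 : cross (H.mulVec w₁) w₂ ≠ 0 := by
    intro h0
    apply hg12
    rw [hU₁, hU₂, Matrix.mulVec_smul, cross_smul_left, cross_smul_right, h0, mul_zero, mul_zero]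
  have n21 : cross (H.mulVec w₂) w₁ ≠ 0 := by
    intro h0
    apply hg21
    rw [hU₂, hU₁, Matrix.mulVec_smul, cross_smul_left, cross_smul_right, h0, mul_zero, mul_zero]
  have n22 : cross (H.mulVec w₂) w₂ ≠ 0 := by
    intro h0
    apply hg22
    rw [hU₂, Matrix.mulVec_smul, cross_smul_left, cross_smul_right, h0, mul_zero, mul_zero]
  have ndet : cross (H.mulVec w₁) (H.mulVec w₂) ≠ 0 := by
    rw [cross_mulVec, hdetH, one_mul]; exact n0
  have ndet' : cross (H.mulVec w₂) (H.mulVec w₁) ≠ 0 := by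
    rw [cross_mulVec, hdetH, one_mul]; exact anti _ _ n0
  -- conjugation pairs
  have cp12 : ∀ k, ConjPair c₁ c₂ (w₁ k) (w₂ k) := by
    intro k
    fin_cases k
    · show ConjPair c₁ c₂ ((a.1 0 1 : ℤ):ℝ) ((a.1 0 1 : ℤ):ℝ)
      exact ConjPair.intC _
    · show ConjPair c₁ c₂ (c₁ - ((a.1 0 0:ℤ):ℝ)) (c₂ - ((a.1 0 0:ℤ):ℝ))
      exact ConjPair.base.sub (ConjPair.intC _)
  have hs2 : c₁ + c₂ = ((a.1 0 0 : ℤ):ℝ) + ((a.1 1 1 : ℤ):ℝ) := by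
    rw [hs]; push_cast; ring
  have cpswap : ConjPair c₁ c₂ c₂ c₁ := by
    refine ⟨a.1 0 0 + a.1 1 1, -1, ?_, ?_⟩ <;> push_cast <;> linarith [hs2]
  have cp21 : ∀ k, ConjPair c₁ c₂ (w₂ k) (w₁ k) := by
    intro k
    fin_cases k
    · show ConjPair c₁ c₂ ((a.1 0 1 : ℤ):ℝ) ((a.1 0 1 : ℤ):ℝ)
      exact ConjPair.intC _
    · show ConjPair c₁ c₂ (c₂ - ((a.1 0 0:ℤ):ℝ)) (c₁ - ((a.1 0 0:ℤ):ℝ))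
      exact cpswap.sub (ConjPair.intC _)
  have cpH : ∀ (X X' : Fin 2 → ℝ), (∀ k, ConjPair c₁ c₂ (X k) (X' k)) →
      ∀ k, ConjPair c₁ c₂ (H.mulVec X k) (H.mulVec X' k) := by
    intro X X' hXX' k
    rw [mulVec_apply', mulVec_apply']
    have e0 : H k 0 = ((h.1 k 0 : ℤ):ℝ) := toReal_apply h k 0
    have e1 : H k 1 = ((h.1 k 1 : ℤ):ℝ) := toReal_apply h k 1
    rw [e0, e1]
    exact ((ConjPair.intC _).mul hs hp (hXX' 0)).add ((ConjPair.intC _).mul hs hp (hXX' 1))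
  -- the key estimate
  have hb256 : (256:ℝ) ≤ Λ^(26*N₁) := by
    calc (256:ℝ) ≤ 2^13 := by norm_num
      _ ≤ (Λ^2)^13 := pow_le_pow_left₀ (by norm_num) hΛ2 13
      _ = Λ^26 := by rw [← pow_mul]
      _ ≤ Λ^(26*N₁) := pow_le_pow_right₀ hΛ1 (by omega)
  have hBpos : (0:ℝ) < 256*M₁^4*M₂^2 := by positivity
  have hBle : 256*M₁^4*M₂^2 ≤ Λ^(30*N₁+2*N₂) := by
    calc 256*M₁^4*M₂^2 ≤ Λ^(26*N₁) * (M₁^4*M₂^2) := by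
          have hnn : (0:ℝ) ≤ M₁^4*M₂^2 := by positivity
          nlinarith [mul_le_mul_of_nonneg_right hb256 hnn]
      _ = Λ^(30*N₁+2*N₂) := by
          rw [hM₁def, hM₂def, ← pow_mul, ← pow_mul, ← pow_add, ← pow_add]
          congr 1
          ring
  have final : ∀ (X Y X' Y' : Fin 2 → ℝ),
      (∀ k, ConjPair c₁ c₂ (X k) (X' k)) → (∀ k, ConjPair c₁ c₂ (Y k) (Y' k)) →
      cross X Y ≠ 0 → cross X' Y' ≠ 0 →
      |cross X' Y'| * (enorm2 X * enorm2 Y) ≤ 256*M₁^4*M₂^2 →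
      Λ ^ (-((30*N₁+2*N₂ : ℕ) : ℤ)) ≤ pdist X Y := by
    intro X Y X' Y' hX hY hx hy hB
    have hcp : ConjPair c₁ c₂ (cross X Y) (cross X' Y') :=
      ((hX 0).mul hs hp (hY 1)).sub ((hX 1).mul hs hp (hY 0))
    have hone := hcp.one_le_abs_mul hs hp hx hy
    have hpd := pdist_ge X Y X' Y' hone hx _ hB
    refine le_trans ?_ hpd
    rw [zpow_neg, zpow_natCast, ← one_div]
    apply one_div_le_one_div_of_le hBpos
    exact le_trans hBle (le_of_eq rfl)
  have hM₂sq : (1:ℝ) ≤ M₂^2 := one_le_pow₀ hM₂1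
  have hM₁4 : (0:ℝ) ≤ M₁^4 := by positivity
  have crossb : ∀ (X Y : Fin 2 → ℝ) (b1 b2 : ℝ), enorm2 X ≤ b1 → enorm2 Y ≤ b2 →
      |cross X Y| ≤ b1*b2 := by
    intro X Y b1 b2 h1 h2
    exact le_trans (cross_abs_le X Y)
      (mul_le_mul h1 h2 (enorm2_nonneg _) (le_trans (enorm2_nonneg _) h1))
  have bnd : ∀ (x e1 e2 b0 b1 b2 : ℝ), |x| ≤ b0 → 0 ≤ e1 → 0 ≤ e2 → e1 ≤ b1 → e2 ≤ b2 →
      b0*(b1*b2) ≤ 256*M₁^4*M₂^2 → |x| * (e1*e2) ≤ 256*M₁^4*M₂^2 := by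
    intro x e1 e2 b0 b1 b2 hb0 h1n h2n h1 h2 hfin
    refine le_trans ?_ hfin
    apply mul_le_mul hb0 (mul_le_mul h1 h2 h2n (le_trans h1n h1)) (mul_nonneg h1n h2n)
      (le_trans (abs_nonneg x) hb0)
  -- rewriting facts for the four vectors
  have hHu₁ : H.mulVec u₁ = k₁ • (H.mulVec w₁) := by rw [hU₁, Matrix.mulVec_smul]
  have hHu₂ : H.mulVec u₂ = k₂ • (H.mulVec w₂) := by rw [hU₂, Matrix.mulVec_smul]
  simp only [Set.mem_insert_iff, Set.mem_singleton_iff] at hu hv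
  rcases hu with rfl | rfl | rfl | rfl <;> rcases hv with rfl | rfl | rfl | rfl
  · exact absurd (cross_self' _) huv
  · rw [hU₁, hU₂, pdist_smul_smul k₁ k₂ hk₁ hk₂]
    exact final w₁ w₂ w₂ w₁ cp12 cp21 n0 (anti _ _ n0)
      (bnd _ _ _ ((4*M₁)*(4*M₁)) (4*M₁) (4*M₁) (crossb _ _ _ _ hw₂n hw₁n) (enorm2_nonneg _)
        (enorm2_nonneg _) hw₁n hw₂n (quad_bound M₁ M₂ (by positivity) hM₂sq))
  · rw [hHu₁, hU₁, pdist_smul_smul k₁ k₁ hk₁ hk₁]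
    exact final w₁ (H.mulVec w₁) w₂ (H.mulVec w₂) cp12 (cpH w₁ w₂ cp12) (anti _ _ n11)
      (anti _ _ n22)
      (bnd _ _ _ ((4*M₁)*(M₂*(4*M₁))) (4*M₁) (M₂*(4*M₁)) (crossb _ _ _ _ hw₂n hHw₂n)
        (enorm2_nonneg _) (enorm2_nonneg _) hw₁n hHw₁n (le_of_eq (by ring)))
  · rw [hHu₂, hU₁, pdist_smul_smul k₁ k₂ hk₁ hk₂]
    exact final w₁ (H.mulVec w₂) w₂ (H.mulVec w₁) cp12 (cpH w₂ w₁ cp21) (anti _ _ n21)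
      (anti _ _ n12)
      (bnd _ _ _ ((4*M₁)*(M₂*(4*M₁))) (4*M₁) (M₂*(4*M₁)) (crossb _ _ _ _ hw₂n hHw₁n)
        (enorm2_nonneg _) (enorm2_nonneg _) hw₁n hHw₂n (le_of_eq (by ring)))
  · rw [hU₂, hU₁, pdist_smul_smul k₂ k₁ hk₂ hk₁]
    exact final w₂ w₁ w₁ w₂ cp21 cp12 (anti _ _ n0) n0
      (bnd _ _ _ ((4*M₁)*(4*M₁)) (4*M₁) (4*M₁) (crossb _ _ _ _ hw₁n hw₂n) (enorm2_nonneg _)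
        (enorm2_nonneg _) hw₂n hw₁n (quad_bound M₁ M₂ (by positivity) hM₂sq))
  · exact absurd (cross_self' _) huv
  · rw [hHu₁, hU₂, pdist_smul_smul k₂ k₁ hk₂ hk₁]
    exact final w₂ (H.mulVec w₁) w₁ (H.mulVec w₂) cp21 (cpH w₁ w₂ cp12) (anti _ _ n12)
      (anti _ _ n21)
      (bnd _ _ _ ((4*M₁)*(M₂*(4*M₁))) (4*M₁) (M₂*(4*M₁)) (crossb _ _ _ _ hw₁n hHw₂n)
        (enorm2_nonneg _) (enorm2_nonneg _) hw₂n hHw₁n (le_of_eq (by ring)))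
  · rw [hHu₂, hU₂, pdist_smul_smul k₂ k₂ hk₂ hk₂]
    exact final w₂ (H.mulVec w₂) w₁ (H.mulVec w₁) cp21 (cpH w₂ w₁ cp21) (anti _ _ n22)
      (anti _ _ n11)
      (bnd _ _ _ ((4*M₁)*(M₂*(4*M₁))) (4*M₁) (M₂*(4*M₁)) (crossb _ _ _ _ hw₁n hHw₁n)
        (enorm2_nonneg _) (enorm2_nonneg _) hw₂n hHw₂n (le_of_eq (by ring)))
  · rw [hHu₁, hU₁, pdist_smul_smul k₁ k₁ hk₁ hk₁]
    exact final (H.mulVec w₁) w₁ (H.mulVec w₂) w₂ (cpH w₁ w₂ cp12) cp12 n11 n22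
      (bnd _ _ _ ((M₂*(4*M₁))*(4*M₁)) (M₂*(4*M₁)) (4*M₁) (crossb _ _ _ _ hHw₂n hw₂n)
        (enorm2_nonneg _) (enorm2_nonneg _) hHw₁n hw₁n (le_of_eq (by ring)))
  · rw [hHu₁, hU₂, pdist_smul_smul k₁ k₂ hk₁ hk₂]
    exact final (H.mulVec w₁) w₂ (H.mulVec w₂) w₁ (cpH w₁ w₂ cp12) cp21 n12 n21
      (bnd _ _ _ ((M₂*(4*M₁))*(4*M₁)) (M₂*(4*M₁)) (4*M₁) (crossb _ _ _ _ hHw₂n hw₁n)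
        (enorm2_nonneg _) (enorm2_nonneg _) hHw₁n hw₂n (le_of_eq (by ring)))
  · exact absurd (cross_self' _) huv
  · rw [hHu₁, hHu₂, pdist_smul_smul k₁ k₂ hk₁ hk₂]
    refine final (H.mulVec w₁) (H.mulVec w₂) (H.mulVec w₂) (H.mulVec w₁) (cpH w₁ w₂ cp12)
      (cpH w₂ w₁ cp21) ndet ndet' ?_
    rw [cross_mulVec, hdetH, one_mul]
    exact bnd _ _ _ ((4*M₁)*(4*M₁)) (M₂*(4*M₁)) (M₂*(4*M₁)) (crossb _ _ _ _ hw₂n hw₁n)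
      (enorm2_nonneg _) (enorm2_nonneg _) hHw₁n hHw₂n (le_of_eq (by ring))
  · rw [hHu₂, hU₁, pdist_smul_smul k₂ k₁ hk₂ hk₁]
    exact final (H.mulVec w₂) w₁ (H.mulVec w₁) w₂ (cpH w₂ w₁ cp21) cp12 n21 n12
      (bnd _ _ _ ((M₂*(4*M₁))*(4*M₁)) (M₂*(4*M₁)) (4*M₁) (crossb _ _ _ _ hHw₁n hw₂n)
        (enorm2_nonneg _) (enorm2_nonneg _) hHw₂n hw₁n (le_of_eq (by ring)))
  · rw [hHu₂, hU₂, pdist_smul_smul k₂ k₂ hk₂ hk₂]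
    exact final (H.mulVec w₂) w₂ (H.mulVec w₁) w₁ (cpH w₂ w₁ cp21) cp21 n22 n11
      (bnd _ _ _ ((M₂*(4*M₁))*(4*M₁)) (M₂*(4*M₁)) (4*M₁) (crossb _ _ _ _ hHw₁n hw₁n)
        (enorm2_nonneg _) (enorm2_nonneg _) hHw₂n hw₂n (le_of_eq (by ring)))
  · rw [hHu₂, hHu₁, pdist_smul_smul k₂ k₁ hk₂ hk₁]
    refine final (H.mulVec w₂) (H.mulVec w₁) (H.mulVec w₁) (H.mulVec w₂) (cpH w₂ w₁ cp21)
      (cpH w₁ w₂ cp12) ndet' ndet ?_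
    rw [cross_mulVec, hdetH, one_mul]
    exact bnd _ _ _ ((4*M₁)*(4*M₁)) (M₂*(4*M₁)) (M₂*(4*M₁)) (crossb _ _ _ _ hw₁n hw₂n)
      (enorm2_nonneg _) (enorm2_nonneg _) hHw₂n hHw₁n (le_of_eq (by ring))
  · exact absurd (cross_self' _) huv
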